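/- arXiv:1903.04970 — 2 statements merged into one kernel-verified Lean document; each statement's English description precedes it below -/
import Mathlib

section
/- Let β > 0, machine energies 0 = ℰ_0 ≤ ⋯ ≤ ℰ_{d_M−1} = ℰ_max with Gibbs state τ_M = τ(β,ℰ), and a qubit target (d_S = 2) with gap 0 < E_S ≤ ℰ_max, whose initial state is the 2×2 Gibbs state τ_S at β with energies (0, E_S). Then for every n ≥ 0 and every sequence of unitaries U_1,…,U_n on ℂ^2⊗ℂ^{d_M}, the largest eigenvalue (ground-state population) of Λ_{U_n}∘⋯∘Λ_{U_1}(τ_S) is at most 1/(1 + e^{−β ℰ_max}). -/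
open Filter Topology Kronecker Matrix
open scoped ComplexOrder

/-- Sum of the `k` largest entries of a real vector (maximum of all `k`-element subset sums). -/
noncomputable def sumKLargest {ι : Type*} [Fintype ι] (v : ι → ℝ) (k : ℕ) : ℝ :=
  sSup {x : ℝ | ∃ s : Finset ι, s.card = k ∧ ∑ i ∈ s, v i = x}

/-- `IsMajorizedBy x y` means `x ≺ y`: same total sum, and for every `k = 1,…,n` the
sum of the `k` largest entries of `x` is at most that of `y`. -/
def IsMajorizedBy {ι : Type*} [Fintype ι] (x y : ι → ℝ) : Prop :=
  (∑ i, x i = ∑ i, y i) ∧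
  ∀ k : ℕ, 1 ≤ k → k ≤ Fintype.card ι → sumKLargest x k ≤ sumKLargest y k

/-- The decreasing rearrangement of a real vector. -/
noncomputable def sortDesc {n : ℕ} (v : Fin n → ℝ) : Fin n → ℝ :=
  fun i => v (Tuple.sort v i.rev)

/-- The geometric probability vector `p*(g,d)` with entries `g^i / ∑_j g^j`. -/
noncomputable def pstar (g : ℝ) (d : ℕ) : Fin d → ℝ :=
  fun i => g ^ (i : ℕ) / ∑ j : Fin d, g ^ (j : ℕ)

/-- The Gibbs probability vector at inverse temperature `β` for energies `E`. -/
noncomputable def gibbsVec {m : ℕ} (β : ℝ) (E : Fin m → ℝ) : Fin m → ℝ :=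
  fun j => Real.exp (-(β * E j)) / ∑ k : Fin m, Real.exp (-(β * E k))

/-- The Gibbs state: diagonal density matrix with the Gibbs vector on the diagonal. -/
noncomputable def gibbsState {m : ℕ} (β : ℝ) (E : Fin m → ℝ) : Matrix (Fin m) (Fin m) ℂ :=
  Matrix.diagonal fun j => (gibbsVec β E j : ℂ)

/-- The eigenvalues of a Hermitian matrix (junk value `0` if not Hermitian). -/
noncomputable def eigVec {ι : Type*} [Fintype ι] [DecidableEq ι] (ρ : Matrix ι ι ℂ) : ι → ℝ := by
  classical exact if h : ρ.IsHermitian then h.eigenvalues else 0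

/-- The eigenvalue vector of a Hermitian matrix, listed in decreasing order. -/
noncomputable def eigVecDesc {d : ℕ} (ρ : Matrix (Fin d) (Fin d) ℂ) : Fin d → ℝ :=
  sortDesc (eigVec ρ)

/-- Partial trace over the machine: `(Tr_M X)_{s,s'} = ∑_m X_{(s,m),(s',m)}`. -/
noncomputable def ptraceM {dS dM : ℕ}
    (X : Matrix (Fin dS × Fin dM) (Fin dS × Fin dM) ℂ) : Matrix (Fin dS) (Fin dS) ℂ :=
  Matrix.of fun s s' => ∑ m : Fin dM, X (s, m) (s', m)

/-- The coherent operation `Λ_U(ρ) = Tr_M (U (ρ ⊗ τ_M) U†)` where `τ_M` is the diagonal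
machine state with diagonal `τ`. -/
noncomputable def coherentOp {dS dM : ℕ} (τ : Fin dM → ℝ)
    (U : Matrix (Fin dS × Fin dM) (Fin dS × Fin dM) ℂ)
    (ρ : Matrix (Fin dS) (Fin dS) ℂ) : Matrix (Fin dS) (Fin dS) ℂ :=
  ptraceM (U * (ρ ⊗ₖ Matrix.diagonal fun j => (τ j : ℂ)) * Uᴴ)

/-- `Λ_{U_n} ∘ ⋯ ∘ Λ_{U_1} (ρ)`: the machine is reset to its Gibbs state before each cycle. -/
noncomputable def coherentSeq {dS dM : ℕ} (τ : Fin dM → ℝ) {n : ℕ}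
    (U : Fin n → Matrix (Fin dS × Fin dM) (Fin dS × Fin dM) ℂ)
    (ρ : Matrix (Fin dS) (Fin dS) ℂ) : Matrix (Fin dS) (Fin dS) ℂ :=
  (List.ofFn U).foldl (fun σ V => coherentOp τ V σ) ρ

/-- The optimal coherent operation `A`: the diagonal matrix whose `i`-th diagonal entry is
`∑_{j<d_M} λ_{i·d_M+j}` where `λ` is the decreasing list of eigenvalues of `ρ ⊗ τ_M`. -/
noncomputable def Aopt {dS dM : ℕ} (τ : Fin dM → ℝ)
    (ρ : Matrix (Fin dS) (Fin dS) ℂ) : Matrix (Fin dS) (Fin dS) ℂ :=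
  Matrix.diagonal fun i : Fin dS =>
    ((∑ j : Fin dM,
      sortDesc
        (fun k : Fin (dS * dM) =>
          eigVec (ρ ⊗ₖ Matrix.diagonal fun l => (τ l : ℂ)) (finProdFinEquiv.symm k))
        ⟨(i : ℕ) * dM + (j : ℕ), by
          calc (i : ℕ) * dM + (j : ℕ) < (i : ℕ) * dM + dM := by
                exact Nat.add_lt_add_left j.isLt _
            _ = ((i : ℕ) + 1) * dM := by ring
            _ ≤ dS * dM := Nat.mul_le_mul_right dM i.isLt⟩ : ℝ) : ℂ)

/-- `Δ_i(p) = a·p_i − b·p_{i−1}` for `i ≥ 1` (and `0` for `i = 0`). -/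
noncomputable def delta (a b : ℝ) {d : ℕ} (p : Fin d → ℝ) (i : Fin d) : ℝ :=
  if (i : ℕ) = 0 then 0
  else a * p i - b * p ⟨(i : ℕ) - 1, Nat.lt_of_le_of_lt (Nat.sub_le _ _) i.isLt⟩

/-- The max-swap map `B`: if some `Δ_i(p) > 0`, pick an index `k̄` maximizing `Δ`,
move `Δ_{k̄}(p)` of population from level `k̄` to level `k̄−1`, and rearrange decreasingly;
otherwise `p` is left unchanged. -/
noncomputable def maxSwap (a b : ℝ) {d : ℕ} (p : Fin d → ℝ) : Fin d → ℝ := by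
  classical
  exact
    if h : ∃ k : Fin d, 0 < delta a b p k ∧ ∀ i, delta a b p i ≤ delta a b p k then
      sortDesc (fun i =>
        if i = h.choose then p h.choose - delta a b p h.choose
        else if (i : ℕ) = (h.choose : ℕ) - 1 then p i + delta a b p h.choose
        else p i)
    else p
section Aux

open Complex

/-- two-term Cauchy–Schwarz for `normSq`. -/
private lemma normSq_cs (a0 a1 b0 b1 : ℂ) :
    Complex.normSq ((starRingEnd ℂ) a0 * b0 + (starRingEnd ℂ) a1 * b1) ≤
      (Complex.normSq a0 + Complex.normSq a1) * (Complex.normSq b0 + Complex.normSq b1) := by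
  have h1 : ‖(starRingEnd ℂ) a0 * b0 + (starRingEnd ℂ) a1 * b1‖
      ≤ ‖a0‖ * ‖b0‖ + ‖a1‖ * ‖b1‖ := by
    calc _ ≤ ‖(starRingEnd ℂ) a0 * b0‖ + ‖(starRingEnd ℂ) a1 * b1‖ :=
          norm_add_le _ _
      _ = _ := by simp [_root_.map_mul]
  have h2 : Complex.normSq ((starRingEnd ℂ) a0 * b0 + (starRingEnd ℂ) a1 * b1)
      = (‖(starRingEnd ℂ) a0 * b0 + (starRingEnd ℂ) a1 * b1‖)^2 := by
    rw [Complex.sq_norm]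
  rw [h2, ← Complex.sq_norm a0, ← Complex.sq_norm a1, ← Complex.sq_norm b0, ← Complex.sq_norm b1]
  have := norm_nonneg ((starRingEnd ℂ) a0 * b0 + (starRingEnd ℂ) a1 * b1)
  nlinarith [sq_nonneg (‖a0‖ * ‖b1‖ - ‖a1‖ * ‖b0‖),
    norm_nonneg a0, norm_nonneg a1, norm_nonneg b0, norm_nonneg b1]

/-- core corner inequality -/
private lemma corner_core (g w r0 r1 a b N : ℝ) (hg0 : 0 < g)
    (hwg : g ≤ w) (hw1 : w ≤ 1) (hr0 : 0 ≤ r0) (hr1 : 0 ≤ r1) (hsum : r0 + r1 = 1)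
    (hr0P : r0 * (1+g) ≤ 1) (hr1P : r1 * (1+g) ≤ 1)
    (ha : 0 ≤ a) (haN : a ≤ N) (hb : 0 ≤ b) (hbN : b ≤ N) :
    (r0*a + r1*b) * w * (1+g) ≤ N*w + g*(a+b-N) := by
  have hN : 0 ≤ N := le_trans ha haN
  rcases eq_or_lt_of_le hN with h|h
  · have ha0 : a = 0 := le_antisymm (h ▸ haN) ha
    have hb0 : b = 0 := le_antisymm (h ▸ hbN) hb
    simp [ha0, hb0, ← h]
  · have hr1' : r1 = 1 - r0 := by linarith
    subst hr1'
    nlinarith [mul_nonneg (mul_nonneg (sub_nonneg.2 haN) (sub_nonneg.2 hbN)) (sub_nonneg.2 hwg),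
      mul_nonneg (mul_nonneg (sub_nonneg.2 haN) hb)
        (mul_nonneg (le_trans hg0.le hwg) (by nlinarith : (0:ℝ) ≤ 1 - (1-r0)*(1+g))),
      mul_nonneg (mul_nonneg ha (sub_nonneg.2 hbN))
        (mul_nonneg (le_trans hg0.le hwg) (by nlinarith : (0:ℝ) ≤ 1 - r0*(1+g))),
      mul_nonneg (mul_nonneg ha hb) (mul_nonneg hg0.le (sub_nonneg.2 hw1))]

/-- embed a system vector at machine index `m` -/
private def emb {dS dM : ℕ} (v : Fin dS → ℂ) (m : Fin dM) : Fin dS × Fin dM → ℂ :=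
  fun k => if k.2 = m then v k.1 else 0

private lemma dot_star_self {n : Type*} [Fintype n] (x : n → ℂ) :
    star x ⬝ᵥ x = ((∑ i, Complex.normSq (x i) : ℝ) : ℂ) := by
  simp only [dotProduct, Pi.star_apply, RCLike.star_def]
  push_cast
  refine Finset.sum_congr rfl fun i _ => ?_
  rw [mul_comm, Complex.mul_conj]

private lemma sum_normSq_emb {dS dM : ℕ} (v : Fin dS → ℂ) (m : Fin dM) :
    ∑ k : Fin dS × Fin dM, Complex.normSq (emb v m k) = ∑ s, Complex.normSq (v s) := by
  rw [Fintype.sum_prod_type_right]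
  rw [Finset.sum_eq_single m]
  · simp [emb]
  · intro b _ hb
    apply Finset.sum_eq_zero
    intro s _
    simp [emb, hb]
  · simp

private lemma ptraceM_quadform {dS dM : ℕ} (X : Matrix (Fin dS × Fin dM) (Fin dS × Fin dM) ℂ)
    (v : Fin dS → ℂ) :
    star v ⬝ᵥ (ptraceM X) *ᵥ v = ∑ m : Fin dM, star (emb v m) ⬝ᵥ X *ᵥ (emb v m) := by
  simp only [dotProduct, mulVec, ptraceM, emb, Matrix.of_apply, Pi.star_apply,
    Fintype.sum_prod_type, dotProduct]
  rw [Finset.sum_comm]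
  refine Finset.sum_congr rfl fun m _ => ?_
  simp only [Finset.mul_sum, Finset.sum_mul]
  rw [Finset.sum_comm]
  refine Finset.sum_congr rfl fun s _ => ?_
  simp only [apply_ite, star_zero, ite_mul, zero_mul, mul_ite, mul_zero]
  simp [Finset.sum_ite_eq', Finset.mul_sum, mul_comm, mul_assoc, mul_left_comm]

private lemma conj_quadform {n : Type*} [Fintype n] [DecidableEq n]
    (W : Matrix n n ℂ) (d : n → ℝ) (x : n → ℂ) :
    star x ⬝ᵥ (W * Matrix.diagonal (fun l => ((d l : ℝ) : ℂ)) * Wᴴ) *ᵥ x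
      = ((∑ l, d l * Complex.normSq ((Wᴴ *ᵥ x) l) : ℝ) : ℂ) := by
  have h1 : star x ᵥ* W = star (Wᴴ *ᵥ x) := by
    rw [star_mulVec, conjTranspose_conjTranspose]
  rw [← mulVec_mulVec, ← mulVec_mulVec, dotProduct_mulVec, h1]
  push_cast
  simp only [mulVec_diagonal, dotProduct, Pi.star_apply, RCLike.star_def]
  refine Finset.sum_congr rfl fun l _ => ?_
  rw [mul_left_comm, Complex.normSq_eq_conj_mul_self]

/-- norm preservation: if `W * Wᴴ = 1` then `Wᴴ *ᵥ x` has the same normSq sum as `x`. -/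
private lemma sum_normSq_mulVec {n : Type*} [Fintype n] [DecidableEq n]
    {W : Matrix n n ℂ} (hW : W * Wᴴ = 1) (x : n → ℂ) :
    ∑ l, Complex.normSq ((Wᴴ *ᵥ x) l) = ∑ k, Complex.normSq (x k) := by
  have h1 : star x ᵥ* W = star (Wᴴ *ᵥ x) := by
    rw [star_mulVec, conjTranspose_conjTranspose]
  have h2 : star (Wᴴ *ᵥ x) ⬝ᵥ (Wᴴ *ᵥ x) = star x ⬝ᵥ x := by
    rw [← h1, dotProduct_mulVec, vecMul_vecMul, hW, vecMul_one]
  rw [dot_star_self, dot_star_self] at h2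
  exact_mod_cast h2

/-- column norms of a matrix with `Wᴴ * W = 1`. -/
private lemma sum_normSq_col {n : Type*} [Fintype n] [DecidableEq n]
    {W : Matrix n n ℂ} (hW : Wᴴ * W = 1) (l : n) :
    ∑ k, Complex.normSq (W k l) = 1 := by
  have := congrFun (congrFun hW l) l
  simp only [Matrix.mul_apply, Matrix.conjTranspose_apply, Matrix.one_apply_eq] at this
  have : ((∑ k, Complex.normSq (W k l) : ℝ) : ℂ) = 1 := by
    rw [← this]
    push_cast
    refine Finset.sum_congr rfl fun k _ => ?_
    rw [RCLike.star_def, mul_comm, Complex.mul_conj]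
  exact_mod_cast this

end Aux

section Aux2

private lemma ptraceM_isHermitian {dS dM : ℕ} {X : Matrix (Fin dS × Fin dM) (Fin dS × Fin dM) ℂ}
    (hX : X.IsHermitian) : (ptraceM X).IsHermitian := by
  ext s s'
  simp only [Matrix.conjTranspose_apply, ptraceM, Matrix.of_apply, star_sum]
  exact Finset.sum_congr rfl fun m _ => congrFun (congrFun hX (s, m)) (s', m)

private lemma trace_ptraceM {dS dM : ℕ} (X : Matrix (Fin dS × Fin dM) (Fin dS × Fin dM) ℂ) :
    (ptraceM X).trace = X.trace := by
  simp [ptraceM, Matrix.trace, Matrix.diag, Fintype.sum_prod_type]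

private lemma kron_conjTranspose {m n : Type*} [Fintype m] [Fintype n]
    (A : Matrix m m ℂ) (B : Matrix n n ℂ) :
    (Matrix.kroneckerMap (· * ·) A B)ᴴ = Matrix.kroneckerMap (· * ·) Aᴴ Bᴴ := by
  ext ⟨i, j⟩ ⟨k, l⟩
  simp [Matrix.conjTranspose_apply, Matrix.kroneckerMap_apply, star_mul']

private lemma eigenvalues_le_of_posSemidef {n : Type*} [Fintype n] [DecidableEq n]
    {σ : Matrix n n ℂ} (h : σ.IsHermitian) {P : ℝ}
    (hP : ((P : ℂ) • (1 : Matrix n n ℂ) - σ).PosSemidef) (i : n) :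
    h.eigenvalues i ≤ P := by
  set x : n → ℂ := ⇑(h.eigenvectorBasis i) with hxdef
  have hx : σ *ᵥ x = ((h.eigenvalues i : ℝ) : ℂ) • x := by
    rw [h.mulVec_eigenvectorBasis i]
    ext k
    simp only [Pi.smul_apply, Complex.real_smul, smul_eq_mul]
    rfl
  have hnorm : ∑ k, Complex.normSq (x k) = 1 := by
    have h1 : ‖h.eigenvectorBasis i‖ = 1 := h.eigenvectorBasis.orthonormal.1 i
    have h2 : ‖h.eigenvectorBasis i‖ ^ 2 = ∑ k, Complex.normSq (x k) := by
      rw [EuclideanSpace.norm_eq, Real.sq_sqrt (by positivity)]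
      refine Finset.sum_congr rfl fun k _ => ?_
      rw [← Complex.sq_norm]
    rw [← h2, h1, one_pow]
  have h0 := hP.dotProduct_mulVec_nonneg x
  rw [Matrix.sub_mulVec, Matrix.smul_mulVec, Matrix.one_mulVec, hx,
    dotProduct_sub, dotProduct_smul, dotProduct_smul,
    dot_star_self, hnorm] at h0
  simp only [Complex.ofReal_one, mul_one, smul_eq_mul] at h0
  have h0' : (0 : ℂ) ≤ (((P - h.eigenvalues i : ℝ)) : ℂ) := by push_cast; exact h0
  rw [Complex.zero_le_real] at h0'
  linarith

end Aux2

section Aux3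

open Matrix Kronecker
open scoped ComplexOrder

private lemma step_good {dM : ℕ} (hdM : 0 < dM) (w : Fin dM → ℝ) {g : ℝ}
    (hg0 : 0 < g) (hg1 : g < 1) (hwg : ∀ j, g ≤ w j) (hw1 : ∀ j, w j ≤ 1)
    (σ : Matrix (Fin 2) (Fin 2) ℂ) (hpsd : σ.PosSemidef) (htr : σ.trace = 1)
    (hble : (((1/(1+g) : ℝ) : ℂ) • (1 : Matrix (Fin 2) (Fin 2) ℂ) - σ).PosSemidef)
    (U : Matrix (Fin 2 × Fin dM) (Fin 2 × Fin dM) ℂ)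
    (hU : U ∈ Matrix.unitaryGroup (Fin 2 × Fin dM) ℂ) :
    (coherentOp (fun j => w j / ∑ k, w k) U σ).PosSemidef ∧
    (coherentOp (fun j => w j / ∑ k, w k) U σ).trace = 1 ∧
    (((1/(1+g) : ℝ) : ℂ) • (1 : Matrix (Fin 2) (Fin 2) ℂ) -
      coherentOp (fun j => w j / ∑ k, w k) U σ).PosSemidef := by
  classical
  have hne : Nonempty (Fin dM) := ⟨⟨0, hdM⟩⟩
  set Z : ℝ := ∑ k, w k with hZdef
  have hwpos : ∀ j, 0 < w j := fun j => lt_of_lt_of_le hg0 (hwg j)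
  have hZpos : 0 < Z := Finset.sum_pos (fun j _ => hwpos j) Finset.univ_nonempty
  set τ : Fin dM → ℝ := fun j => w j / Z with hτdef
  have hτsum : ∑ j, τ j = 1 := by
    rw [hτdef, ← Finset.sum_div, ← hZdef, div_self hZpos.ne']
  have hτpos : ∀ j, 0 < τ j := fun j => div_pos (hwpos j) hZpos
  have h := hpsd.1
  have hr0 : ∀ i, 0 ≤ h.eigenvalues i := hpsd.eigenvalues_nonneg
  have hrP : ∀ i, h.eigenvalues i ≤ 1/(1+g) := fun i => eigenvalues_le_of_posSemidef h hble i
  have h1g : (0:ℝ) < 1 + g := by linarith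
  have hrP' : ∀ i, h.eigenvalues i * (1+g) ≤ 1 := by
    intro i
    calc h.eigenvalues i * (1+g) ≤ (1/(1+g)) * (1+g) :=
          mul_le_mul_of_nonneg_right (hrP i) h1g.le
      _ = 1 := by field_simp
  set V : Matrix (Fin 2) (Fin 2) ℂ := (h.eigenvectorUnitary : Matrix (Fin 2) (Fin 2) ℂ) with hVdef
  have hVmem := h.eigenvectorUnitary.2
  rw [Unitary.mem_iff] at hVmem
  have hV1 : V * Vᴴ = 1 := by
    rw [← Matrix.star_eq_conjTranspose]; exact hVmem.2
  have hV2 : Vᴴ * V = 1 := by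
    rw [← Matrix.star_eq_conjTranspose]; exact hVmem.1
  rw [Unitary.mem_iff] at hU
  have hU1 : U * Uᴴ = 1 := by rw [← Matrix.star_eq_conjTranspose]; exact hU.2
  have hU2 : Uᴴ * U = 1 := by rw [← Matrix.star_eq_conjTranspose]; exact hU.1
  set W : Matrix (Fin 2 × Fin dM) (Fin 2 × Fin dM) ℂ :=
    U * (kroneckerMap (· * ·) V (1 : Matrix (Fin dM) (Fin dM) ℂ)) with hWdef
  set d : Fin 2 × Fin dM → ℝ := fun l => h.eigenvalues l.1 * τ l.2 with hddef
  have hkron_ct : (kroneckerMap (· * ·) V (1 : Matrix (Fin dM) (Fin dM) ℂ))ᴴ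
      = kroneckerMap (· * ·) Vᴴ (1 : Matrix (Fin dM) (Fin dM) ℂ) := by
    rw [kron_conjTranspose, Matrix.conjTranspose_one]
  have hk1 : kroneckerMap (· * ·) V (1 : Matrix (Fin dM) (Fin dM) ℂ) *
      kroneckerMap (· * ·) Vᴴ (1 : Matrix (Fin dM) (Fin dM) ℂ) = 1 := by
    rw [← Matrix.mul_kronecker_mul, hV1, Matrix.one_mul, Matrix.one_kronecker_one]
  have hk2 : kroneckerMap (· * ·) Vᴴ (1 : Matrix (Fin dM) (Fin dM) ℂ) *
      kroneckerMap (· * ·) V (1 : Matrix (Fin dM) (Fin dM) ℂ) = 1 := by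
    rw [← Matrix.mul_kronecker_mul, hV2, Matrix.one_mul, Matrix.one_kronecker_one]
  have hW1 : W * Wᴴ = 1 := by
    rw [hWdef, Matrix.conjTranspose_mul, hkron_ct, Matrix.mul_assoc,
      ← Matrix.mul_assoc (kroneckerMap (· * ·) V (1 : Matrix (Fin dM) (Fin dM) ℂ)),
      hk1, Matrix.one_mul, hU1]
  have hW2 : Wᴴ * W = 1 := by
    rw [hWdef, Matrix.conjTranspose_mul, hkron_ct, Matrix.mul_assoc,
      ← Matrix.mul_assoc Uᴴ, hU2, Matrix.one_mul, hk2]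
  have hσ : σ = V * Matrix.diagonal (RCLike.ofReal ∘ h.eigenvalues) * Vᴴ := by
    rw [← Matrix.star_eq_conjTranspose]; exact h.spectral_theorem
  have hk3 : kroneckerMap (· * ·) (V * Matrix.diagonal (RCLike.ofReal ∘ h.eigenvalues) * Vᴴ)
        ((1 : Matrix (Fin dM) (Fin dM) ℂ) * Matrix.diagonal (fun j => ((τ j : ℝ) : ℂ)) *
          (1 : Matrix (Fin dM) (Fin dM) ℂ))
      = kroneckerMap (· * ·) V (1 : Matrix (Fin dM) (Fin dM) ℂ) *
          Matrix.diagonal (fun l => ((d l : ℝ) : ℂ)) *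
          kroneckerMap (· * ·) Vᴴ (1 : Matrix (Fin dM) (Fin dM) ℂ) := by
    rw [Matrix.mul_kronecker_mul, Matrix.mul_kronecker_mul,
      Matrix.diagonal_kronecker_diagonal]
    congr 2
    ext l
    simp [hddef, Function.comp, Complex.ofReal_mul]
  have hdecomp : U * (kroneckerMap (· * ·) σ (Matrix.diagonal fun j => ((τ j : ℝ) : ℂ))) * Uᴴ
      = W * Matrix.diagonal (fun l => ((d l : ℝ) : ℂ)) * Wᴴ := by
    conv_lhs => rw [hσ]
    rw [show (Matrix.diagonal fun j => ((τ j : ℝ) : ℂ))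
        = (1 : Matrix (Fin dM) (Fin dM) ℂ) * Matrix.diagonal (fun j => ((τ j : ℝ) : ℂ)) *
          (1 : Matrix (Fin dM) (Fin dM) ℂ) by rw [Matrix.one_mul, Matrix.mul_one]]
    rw [hk3, hWdef, Matrix.conjTranspose_mul, hkron_ct]
    simp only [Matrix.mul_assoc]
  have hco : coherentOp τ U σ = ptraceM (W * Matrix.diagonal (fun l => ((d l : ℝ) : ℂ)) * Wᴴ) := by
    exact congrArg ptraceM hdecomp
  have hd0 : ∀ l, 0 ≤ d l := fun l => mul_nonneg (hr0 l.1) (hτpos l.2).le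
  have hXherm : (W * Matrix.diagonal (fun l => ((d l : ℝ) : ℂ)) * Wᴴ).IsHermitian := by
    apply Matrix.isHermitian_mul_mul_conjTranspose
    have hstar : (star fun l : Fin 2 × Fin dM => ((d l : ℝ) : ℂ))
        = fun l : Fin 2 × Fin dM => ((d l : ℝ) : ℂ) :=
      funext fun l => Complex.conj_ofReal _
    rw [Matrix.IsHermitian, Matrix.diagonal_conjTranspose, hstar]
  have hσ'herm : (coherentOp τ U σ).IsHermitian := by
    rw [hco]; exact ptraceM_isHermitian hXherm
  have hquad : ∀ v : Fin 2 → ℂ, star v ⬝ᵥ (coherentOp τ U σ) *ᵥ v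
      = ((∑ l : Fin 2 × Fin dM, d l * ∑ m, Complex.normSq ((Wᴴ *ᵥ emb v m) l) : ℝ) : ℂ) := by
    intro v
    rw [hco, ptraceM_quadform]
    rw [Finset.sum_congr rfl (fun m _ => conj_quadform W d (emb v m))]
    push_cast
    rw [Finset.sum_comm]
    exact Finset.sum_congr rfl fun l _ => by rw [Finset.mul_sum]
  have hrsum : ∑ i : Fin 2, h.eigenvalues i = 1 := by
    have hts : σ.trace = ((∑ i : Fin 2, h.eigenvalues i : ℝ) : ℂ) := by
      nth_rewrite 1 [hσ]
      rw [Matrix.trace_mul_comm (V * Matrix.diagonal (RCLike.ofReal ∘ h.eigenvalues)) Vᴴ,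
        ← Matrix.mul_assoc, hV2, Matrix.one_mul, Matrix.trace_diagonal]
      push_cast; rfl
    rw [htr] at hts
    exact_mod_cast hts.symm
  refine ⟨.of_dotProduct_mulVec_nonneg hσ'herm fun v => ?_, ?_, ?_⟩
  · rw [hquad v, Complex.zero_le_real]
    refine Finset.sum_nonneg fun l _ => mul_nonneg (hd0 l) ?_
    exact Finset.sum_nonneg fun m _ => Complex.normSq_nonneg _
  · rw [hco, trace_ptraceM, Matrix.trace_mul_comm (W * Matrix.diagonal fun l => ((d l : ℝ) : ℂ)) Wᴴ,
      ← Matrix.mul_assoc, hW2, Matrix.one_mul, Matrix.trace_diagonal]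
    have h1 : ∑ l : Fin 2 × Fin dM, ((d l : ℝ) : ℂ) = ((∑ l : Fin 2 × Fin dM, d l : ℝ) : ℂ) := by
      push_cast; rfl
    have h2 : ∑ l : Fin 2 × Fin dM, d l = (∑ i : Fin 2, h.eigenvalues i) * (∑ j, τ j) := by
      rw [Finset.sum_mul_sum, Fintype.sum_prod_type]
    rw [h1, h2, hτsum, hrsum]
    norm_num
  · have hherm1 : (((1/(1+g) : ℝ) : ℂ) • (1 : Matrix (Fin 2) (Fin 2) ℂ)).IsHermitian := by
      rw [Matrix.IsHermitian, Matrix.conjTranspose_smul, Matrix.conjTranspose_one,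
        RCLike.star_def, Complex.conj_ofReal]
    refine .of_dotProduct_mulVec_nonneg (hherm1.sub hσ'herm) fun v => ?_
    rw [Matrix.sub_mulVec, dotProduct_sub, Matrix.smul_mulVec,
      Matrix.one_mulVec, dotProduct_smul, dot_star_self, hquad v, smul_eq_mul]
    set N : ℝ := ∑ s, Complex.normSq (v s) with hNdef
    set c : Fin 2 × Fin dM → ℝ := fun l => ∑ m, Complex.normSq ((Wᴴ *ᵥ emb v m) l) with hcdef
    have hc0 : ∀ l, 0 ≤ c l := fun l => Finset.sum_nonneg fun m _ => Complex.normSq_nonneg _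
    have hcsum : ∑ l, c l = (dM : ℝ) * N := by
      have hm : ∀ m : Fin dM, ∑ l, Complex.normSq ((Wᴴ *ᵥ emb v m) l) = N := by
        intro m
        rw [sum_normSq_mulVec hW1, sum_normSq_emb v m]
      rw [hcdef, Finset.sum_comm]
      simp only [hm]
      rw [Finset.sum_const, Finset.card_univ, Fintype.card_fin, nsmul_eq_mul]
    have hcN : ∀ l, c l ≤ N := by
      intro l
      have hterm : ∀ m : Fin dM, (Wᴴ *ᵥ emb v m) l
          = (starRingEnd ℂ) (W (0, m) l) * v 0 + (starRingEnd ℂ) (W (1, m) l) * v 1 := by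
        intro m
        simp only [Matrix.mulVec, dotProduct, Matrix.conjTranspose_apply,
          Fintype.sum_prod_type_right, emb]
        rw [Finset.sum_eq_single m]
        · simp [Fin.sum_univ_two, RCLike.star_def]
        · intro b _ hb
          apply Finset.sum_eq_zero
          intro s _
          simp [hb]
        · simp
      calc c l ≤ ∑ m, (Complex.normSq (W (0, m) l) + Complex.normSq (W (1, m) l)) * N := by
            refine Finset.sum_le_sum fun m _ => ?_
            rw [hterm m]
            have := normSq_cs (W (0, m) l) (W (1, m) l) (v 0) (v 1)
            calc Complex.normSq _ ≤ (Complex.normSq (W (0, m) l) + Complex.normSq (W (1, m) l)) *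
                  (Complex.normSq (v 0) + Complex.normSq (v 1)) := this
              _ = _ := by rw [hNdef, Fin.sum_univ_two]
        _ = N * ∑ k : Fin 2 × Fin dM, Complex.normSq (W k l) := by
            rw [Fintype.sum_prod_type_right, Finset.mul_sum]
            exact Finset.sum_congr rfl fun m _ => by rw [Fin.sum_univ_two, mul_comm]
        _ = N := by rw [sum_normSq_col hW2 l, mul_one]
    have key : ∑ l, d l * c l ≤ (1/(1+g)) * N := by
      have hsplit : ∑ l : Fin 2 × Fin dM, d l * c l
          = ∑ j : Fin dM, (h.eigenvalues 0 * τ j * c (0, j) + h.eigenvalues 1 * τ j * c (1, j)) := by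
        rw [Fintype.sum_prod_type, Finset.sum_comm]
        refine Finset.sum_congr rfl fun j _ => ?_
        rw [Fin.sum_univ_two]
      have hN0 : 0 ≤ N := Finset.sum_nonneg fun s _ => Complex.normSq_nonneg _
      have hrsum2 : h.eigenvalues 0 + h.eigenvalues 1 = 1 := by
        rw [← hrsum, Fin.sum_univ_two]
      have hperj : ∀ j : Fin dM,
          h.eigenvalues 0 * τ j * c (0, j) + h.eigenvalues 1 * τ j * c (1, j)
            ≤ (N * w j + g * (c (0, j) + c (1, j) - N)) / ((1+g) * Z) := by
        intro j
        have hcore := corner_core g (w j) (h.eigenvalues 0) (h.eigenvalues 1)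
          (c (0, j)) (c (1, j)) N hg0 (hwg j) (hw1 j) (hr0 0) (hr0 1) hrsum2
          (hrP' 0) (hrP' 1) (hc0 _) (hcN _) (hc0 _) (hcN _)
        have hpos : (0:ℝ) < (1+g) * Z := mul_pos h1g hZpos
        have hτj : τ j = w j / Z := by rw [hτdef]
        have heq : h.eigenvalues 0 * τ j * c (0, j) + h.eigenvalues 1 * τ j * c (1, j)
            = ((h.eigenvalues 0 * c (0, j) + h.eigenvalues 1 * c (1, j)) * w j * (1+g))
              / ((1+g) * Z) := by
          rw [hτj]
          field_simp
        rw [heq]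
        exact (div_le_div_iff_of_pos_right hpos).mpr hcore
      have hc2 : ∑ j, (c (0, j) + c (1, j)) = (dM : ℝ) * N := by
        rw [← hcsum, Fintype.sum_prod_type, Finset.sum_comm]
        exact Finset.sum_congr rfl fun j _ => (Fin.sum_univ_two (fun i : Fin 2 => c (i, j))).symm
      have hnum : ∑ j, (N * w j + g * (c (0, j) + c (1, j) - N)) = N * Z := by
        rw [Finset.sum_add_distrib, ← Finset.mul_sum, ← hZdef, ← Finset.mul_sum,
          Finset.sum_sub_distrib, hc2, Finset.sum_const, Finset.card_univ, Fintype.card_fin,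
          nsmul_eq_mul]
        ring
      calc ∑ l, d l * c l
          = ∑ j, (h.eigenvalues 0 * τ j * c (0, j) + h.eigenvalues 1 * τ j * c (1, j)) := hsplit
        _ ≤ ∑ j, (N * w j + g * (c (0, j) + c (1, j) - N)) / ((1+g) * Z) :=
            Finset.sum_le_sum fun j _ => hperj j
        _ = (∑ j, (N * w j + g * (c (0, j) + c (1, j) - N))) / ((1+g) * Z) := by
            rw [Finset.sum_div]
        _ = (N * Z) / ((1+g) * Z) := by rw [hnum]
        _ = N / (1+g) := mul_div_mul_right N (1+g) hZpos.ne'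
        _ = (1/(1+g)) * N := by ring
    have hcast : ((1/(1+g) : ℝ) : ℂ) * ((N : ℝ) : ℂ) - ((∑ l, d l * c l : ℝ) : ℂ)
        = (((1/(1+g)) * N - ∑ l, d l * c l : ℝ) : ℂ) := by push_cast; ring
    rw [hcast, Complex.zero_le_real]
    linarith
  
end Aux3

section Aux4

open Matrix Kronecker
open scoped ComplexOrder

private lemma diag_posSemidef {n : ℕ} (f : Fin n → ℝ) (hf : ∀ i, 0 ≤ f i) :
    (Matrix.diagonal fun i => ((f i : ℝ) : ℂ)).PosSemidef :=
  Matrix.posSemidef_diagonal_iff.mpr fun i => Complex.zero_le_real.mpr (hf i)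

private lemma smul_one_sub_diagonal {n : ℕ} (P : ℝ) (f : Fin n → ℝ) :
    (P : ℂ) • (1 : Matrix (Fin n) (Fin n) ℂ) - Matrix.diagonal (fun i => ((f i : ℝ) : ℂ))
      = Matrix.diagonal (fun i => ((P - f i : ℝ) : ℂ)) := by
  rw [← Matrix.diagonal_one, ← Matrix.diagonal_smul, Matrix.diagonal_sub]
  congr 1
  funext i
  simp only [Pi.smul_apply, Pi.sub_apply, smul_eq_mul, mul_one]
  push_cast
  ring

private lemma gibbsVec_sum {m : ℕ} (hm : 0 < m) (β : ℝ) (E : Fin m → ℝ) :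
    ∑ j, gibbsVec β E j = 1 := by
  have : Nonempty (Fin m) := ⟨⟨0, hm⟩⟩
  have hZ : 0 < ∑ k, Real.exp (-(β * E k)) :=
    Finset.sum_pos (fun k _ => Real.exp_pos _) Finset.univ_nonempty
  simp only [gibbsVec]
  rw [← Finset.sum_div, div_self hZ.ne']

private lemma eigVecDesc_le {σ : Matrix (Fin 2) (Fin 2) ℂ} (h : σ.IsHermitian) {P : ℝ}
    (hP : ((P : ℝ) : ℂ) • (1 : Matrix (Fin 2) (Fin 2) ℂ) - σ |>.PosSemidef) :
    eigVecDesc σ 0 ≤ P := by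
  have hall : ∀ i, eigVec σ i ≤ P := by
    intro i
    unfold eigVec
    rw [dif_pos h]
    exact eigenvalues_le_of_posSemidef h hP i
  exact hall _

private lemma seq_good {dM : ℕ} (hdM : 0 < dM) (w : Fin dM → ℝ) {g : ℝ}
    (hg0 : 0 < g) (hg1 : g < 1) (hwg : ∀ j, g ≤ w j) (hw1 : ∀ j, w j ≤ 1)
    (L : List (Matrix (Fin 2 × Fin dM) (Fin 2 × Fin dM) ℂ))
    (hL : ∀ V ∈ L, V ∈ Matrix.unitaryGroup (Fin 2 × Fin dM) ℂ)
    (σ : Matrix (Fin 2) (Fin 2) ℂ) (h1 : σ.PosSemidef) (h2 : σ.trace = 1)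
    (h3 : (((1/(1+g) : ℝ) : ℂ) • (1 : Matrix (Fin 2) (Fin 2) ℂ) - σ).PosSemidef) :
    (L.foldl (fun σ V => coherentOp (fun j => w j / ∑ k, w k) V σ) σ).PosSemidef ∧
    (L.foldl (fun σ V => coherentOp (fun j => w j / ∑ k, w k) V σ) σ).trace = 1 ∧
    (((1/(1+g) : ℝ) : ℂ) • (1 : Matrix (Fin 2) (Fin 2) ℂ) -
      L.foldl (fun σ V => coherentOp (fun j => w j / ∑ k, w k) V σ) σ).PosSemidef := by
  induction L generalizing σ with
  | nil => exact ⟨h1, h2, h3⟩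
  | cons V L ih =>
    have hV : V ∈ Matrix.unitaryGroup (Fin 2 × Fin dM) ℂ := hL V List.mem_cons_self
    obtain ⟨s1, s2, s3⟩ := step_good hdM w hg0 hg1 hwg hw1 σ h1 h2 h3 V hV
    simpa only [List.foldl_cons] using
      ih (fun V' hV' => hL V' (List.mem_cons_of_mem V hV')) _ s1 s2 s3

end Aux4

/-- Qubit target, thermal initial state: after any number of cycles of any
coherent machine, the ground-state population is at most `1/(1 + e^{−β ℰ_max})`. -/
theorem qubit_ground_state_bound {dM : ℕ} (hdM : 0 < dM)
    (β : ℝ) (hβ : 0 < β)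
    (E : Fin dM → ℝ) (hmono : Monotone E) (hE0 : E ⟨0, hdM⟩ = 0)
    (ES : ℝ) (hES : 0 < ES) (hESmax : ES ≤ E ⟨dM - 1, Nat.sub_lt hdM Nat.one_pos⟩)
    {n : ℕ}
    (U : Fin n → Matrix (Fin 2 × Fin dM) (Fin 2 × Fin dM) ℂ)
    (hU : ∀ i, U i ∈ Matrix.unitaryGroup (Fin 2 × Fin dM) ℂ) :
    eigVecDesc (coherentSeq (gibbsVec β E) U (gibbsState β ![0, ES])) 0 ≤
      1 / (1 + Real.exp (-(β * E ⟨dM - 1, Nat.sub_lt hdM Nat.one_pos⟩))) := by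
  classical
  set Emax : ℝ := E ⟨dM - 1, Nat.sub_lt hdM Nat.one_pos⟩ with hEmaxdef
  set g : ℝ := Real.exp (-(β * Emax)) with hgdef
  have hEmaxpos : 0 < Emax := lt_of_lt_of_le hES hESmax
  have hg0 : 0 < g := Real.exp_pos _
  have hg1 : g < 1 := by
    rw [hgdef, Real.exp_lt_one_iff]
    nlinarith
  set w : Fin dM → ℝ := fun j => Real.exp (-(β * E j)) with hwdef
  have hwg : ∀ j, g ≤ w j := by
    intro j
    apply Real.exp_le_exp.mpr
    have hj : E j ≤ Emax := by
      rw [hEmaxdef]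
      exact hmono (by rw [Fin.le_def]; exact Nat.le_sub_one_of_lt j.isLt)
    nlinarith
  have hw1 : ∀ j, w j ≤ 1 := by
    intro j
    have h0j : (0 : ℝ) ≤ E j := by
      have h := hmono (show (⟨0, hdM⟩ : Fin dM) ≤ j by rw [Fin.le_def]; exact Nat.zero_le _)
      rw [hE0] at h
      exact h
    exact Real.exp_le_one_iff.mpr (by nlinarith)
  set e : ℝ := Real.exp (-(β * ES)) with hedef
  have he0 : 0 < e := Real.exp_pos _
  have he1 : e < 1 := by rw [hedef, Real.exp_lt_one_iff]; nlinarith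
  have hge : g ≤ e := by
    rw [hgdef, hedef]
    exact Real.exp_le_exp.mpr (by nlinarith)
  have h1e : (0 : ℝ) < 1 + e := by positivity
  have hesum : ∑ k : Fin 2, Real.exp (-(β * ![0, ES] k)) = 1 + e := by
    rw [Fin.sum_univ_two]
    simp [Matrix.cons_val_zero, Matrix.cons_val_one, Matrix.head_cons, hedef]
  have hval0 : gibbsVec β ![0, ES] 0 = 1 / (1 + e) := by
    simp only [gibbsVec, hesum]
    simp [Matrix.cons_val_zero]
  have hval1 : gibbsVec β ![0, ES] 1 = e / (1 + e) := by
    simp only [gibbsVec, hesum]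
    simp [Matrix.cons_val_one, Matrix.head_cons, hedef]
  have hinit1 : (gibbsState β ![0, ES]).PosSemidef :=
    diag_posSemidef _ (fun i => by unfold gibbsVec; positivity)
  have hinit2 : (gibbsState β ![0, ES]).trace = 1 := by
    show (Matrix.diagonal fun j => ((gibbsVec β ![0, ES] j : ℝ) : ℂ)).trace = 1
    rw [Matrix.trace_diagonal]
    have hs : ∑ j : Fin 2, gibbsVec β ![0, ES] j = 1 := gibbsVec_sum two_pos β ![0, ES]
    have hcast : ∑ j : Fin 2, ((gibbsVec β ![0, ES] j : ℝ) : ℂ)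
        = ((∑ j : Fin 2, gibbsVec β ![0, ES] j : ℝ) : ℂ) := by push_cast; rfl
    rw [hcast, hs]
    norm_num
  have hinit3 : (((1/(1+g) : ℝ) : ℂ) • (1 : Matrix (Fin 2) (Fin 2) ℂ) -
      gibbsState β ![0, ES]).PosSemidef := by
    show (((1/(1+g) : ℝ) : ℂ) • (1 : Matrix (Fin 2) (Fin 2) ℂ) -
      Matrix.diagonal fun j => ((gibbsVec β ![0, ES] j : ℝ) : ℂ)).PosSemidef
    rw [smul_one_sub_diagonal]
    apply diag_posSemidef
    intro i
    fin_cases i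
    · show (0:ℝ) ≤ 1 / (1 + g) - gibbsVec β ![0, ES] 0
      rw [hval0, sub_nonneg]
      exact one_div_le_one_div_of_le (by positivity) (by linarith)
    · show (0:ℝ) ≤ 1 / (1 + g) - gibbsVec β ![0, ES] 1
      rw [hval1, sub_nonneg, div_le_div_iff₀ h1e (by positivity)]
      nlinarith
  obtain ⟨hf1, hf2, hf3⟩ := seq_good hdM w hg0 hg1 hwg hw1 (List.ofFn U)
    (fun V hV => by
      obtain ⟨i, rfl⟩ := List.mem_ofFn.mp hV
      exact hU i)
    (gibbsState β ![0, ES]) hinit1 hinit2 hinit3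
  have hrw : coherentSeq (gibbsVec β E) U (gibbsState β ![0, ES])
      = (List.ofFn U).foldl (fun σ V => coherentOp (fun j => w j / ∑ k, w k) V σ)
          (gibbsState β ![0, ES]) := rfl
  calc eigVecDesc (coherentSeq (gibbsVec β E) U (gibbsState β ![0, ES])) 0
      ≤ 1 / (1 + g) := by
        rw [hrw]
        exact eigVecDesc_le hf1.1 hf3
    _ = 1 / (1 + Real.exp (-(β * E ⟨dM - 1, Nat.sub_lt hdM Nat.one_pos⟩))) := by rw [hgdef]
end

section
/- For every probability vector p ∈ ℝ^d with decreasing entries and all integers n ≥ m ≥ 0, the vector B^n(p) majorizes B^m(p) (where B^0(p) = p). -/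
open Filter Topology Kronecker Matrix
open scoped ComplexOrder

section Aux

open Finset

lemma sumKLargest_set_finite {ι : Type*} [Fintype ι] (v : ι → ℝ) (k : ℕ) :
    {x : ℝ | ∃ s : Finset ι, s.card = k ∧ ∑ i ∈ s, v i = x}.Finite := by
  classical
  have hsub : {x : ℝ | ∃ s : Finset ι, s.card = k ∧ ∑ i ∈ s, v i = x}
      ⊆ (fun s : Finset ι => ∑ i ∈ s, v i) '' Set.univ := by
    rintro x ⟨s, _, rfl⟩; exact ⟨s, trivial, rfl⟩
  exact (Set.finite_univ.image _).subset hsub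

lemma sumKLargest_le_sumKLargest {ι : Type*} [Fintype ι] (v w : ι → ℝ) (k : ℕ)
    (hk : k ≤ Fintype.card ι)
    (H : ∀ s : Finset ι, s.card = k →
        ∃ t : Finset ι, t.card = k ∧ ∑ i ∈ s, v i ≤ ∑ i ∈ t, w i) :
    sumKLargest v k ≤ sumKLargest w k := by
  classical
  obtain ⟨s0, _, hs0⟩ := Finset.exists_subset_card_eq (s := (Finset.univ : Finset ι)) (n := k) (by simpa using hk)
  refine csSup_le ⟨_, s0, hs0, rfl⟩ ?_
  rintro x ⟨s, hs, rfl⟩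
  obtain ⟨t, ht, hle⟩ := H s hs
  exact hle.trans (le_csSup (sumKLargest_set_finite w k).bddAbove ⟨t, ht, rfl⟩)

lemma sumKLargest_comp_equiv {ι : Type*} [Fintype ι] (v : ι → ℝ) (σ : Equiv.Perm ι) (k : ℕ) :
    sumKLargest (v ∘ σ) k = sumKLargest v k := by
  classical
  unfold sumKLargest
  congr 1
  ext x
  constructor
  · rintro ⟨s, hs, rfl⟩
    refine ⟨s.image σ, by rw [Finset.card_image_of_injective _ σ.injective, hs], ?_⟩
    rw [Finset.sum_image (fun a _ b _ h => σ.injective h)]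
    rfl
  · rintro ⟨t, ht, rfl⟩
    refine ⟨t.image σ.symm, by rw [Finset.card_image_of_injective _ σ.symm.injective, ht], ?_⟩
    rw [Finset.sum_image (fun a _ b _ h => σ.symm.injective h)]
    simp

lemma sortDesc_eq_comp {n : ℕ} (v : Fin n → ℝ) :
    sortDesc v = v ∘ (Fin.revPerm.trans (Tuple.sort v)) := rfl

lemma sortDesc_antitone {n : ℕ} (v : Fin n → ℝ) : Antitone (sortDesc v) := by
  intro i j hij
  exact (Tuple.monotone_sort v) (Fin.rev_le_rev.mpr hij)

lemma isMajorizedBy_refl {ι : Type*} [Fintype ι] (x : ι → ℝ) : IsMajorizedBy x x :=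
  ⟨rfl, fun _ _ _ => le_rfl⟩

lemma isMajorizedBy_trans {ι : Type*} [Fintype ι] {x y z : ι → ℝ}
    (h1 : IsMajorizedBy x y) (h2 : IsMajorizedBy y z) : IsMajorizedBy x z :=
  ⟨h1.1.trans h2.1, fun k hk hk' => (h1.2 k hk hk').trans (h2.2 k hk hk')⟩

lemma maxSwap_antitone (a b : ℝ) {d : ℕ} (q : Fin d → ℝ) (hq : Antitone q) :
    Antitone (maxSwap a b q) := by
  classical
  unfold maxSwap
  split_ifs with h
  · exact sortDesc_antitone _
  · exact hq

lemma maxSwap_major (a b : ℝ) {d : ℕ} (q : Fin d → ℝ) (hq : Antitone q) :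
    IsMajorizedBy q (maxSwap a b q) := by
  classical
  unfold maxSwap
  split_ifs with h
  swap
  · exact isMajorizedBy_refl q
  set K := h.choose with hKdef
  have hKpos : 0 < delta a b q K := h.choose_spec.1
  set Δ := delta a b q K with hΔ
  have hK0 : (K : ℕ) ≠ 0 := by
    intro h0
    simp only [hΔ, delta, if_pos h0] at hKpos
    exact lt_irrefl 0 hKpos
  have hK'lt : (K : ℕ) - 1 < d := Nat.lt_of_le_of_lt (Nat.sub_le _ _) K.isLt
  set K' : Fin d := ⟨(K : ℕ) - 1, hK'lt⟩ with hK'def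
  have hK'K : K' < K := by
    rw [Fin.lt_def]
    exact Nat.sub_lt (Nat.pos_of_ne_zero hK0) one_pos
  have hne : K' ≠ K := ne_of_lt hK'K
  set g : Fin d → ℝ := fun i =>
    if i = K then q K - Δ
    else if (i : ℕ) = (K : ℕ) - 1 then q i + Δ else q i with hgdef
  have hg : ∀ i, g i = q i + ((if i = K' then Δ else 0) - (if i = K then Δ else 0)) := by
    intro i
    by_cases hiK : i = K
    · subst hiK
      simp [hgdef, Ne.symm hne]
      ring
    · by_cases hiK' : (i : ℕ) = (K : ℕ) - 1
      · have : i = K' := Fin.ext hiK'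
        subst this
        simp [hgdef, hne, hiK']
      · have hiK'2 : i ≠ K' := by
          intro hh; exact hiK' (by rw [hh])
        simp [hgdef, hiK, hiK', hiK'2]
  have hsumg : ∀ s : Finset (Fin d), ∑ i ∈ s, g i =
      ∑ i ∈ s, q i + ((if K' ∈ s then Δ else 0) - (if K ∈ s then Δ else 0)) := by
    intro s
    calc ∑ i ∈ s, g i
        = ∑ i ∈ s, (q i + ((if i = K' then Δ else 0) - (if i = K then Δ else 0))) := by
          exact Finset.sum_congr rfl fun i _ => hg i
      _ = ∑ i ∈ s, q i + ((∑ i ∈ s, if i = K' then Δ else 0)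
            - (∑ i ∈ s, if i = K then Δ else 0)) := by
          rw [Finset.sum_add_distrib, Finset.sum_sub_distrib]
      _ = ∑ i ∈ s, q i + ((if K' ∈ s then Δ else 0) - (if K ∈ s then Δ else 0)) := by
          rw [Finset.sum_ite_eq' s K' (fun _ => Δ), Finset.sum_ite_eq' s K (fun _ => Δ)]
  constructor
  · rw [sortDesc_eq_comp]
    have hgs : ∑ i, (g ∘ (Fin.revPerm.trans (Tuple.sort g))) i = ∑ i, g i := by
      simpa [Function.comp] using Equiv.sum_comp (Fin.revPerm.trans (Tuple.sort g)) g
    rw [hgs, hsumg Finset.univ]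
    simp
  · intro k hk1 hk2
    rw [sortDesc_eq_comp, sumKLargest_comp_equiv]
    refine sumKLargest_le_sumKLargest q g k (by simpa using hk2) ?_
    intro s hs
    by_cases hKs : K ∈ s
    · by_cases hK's : K' ∈ s
      · exact ⟨s, hs, by rw [hsumg s, if_pos hK's, if_pos hKs]; simp⟩
      · refine ⟨insert K' (s.erase K), ?_, ?_⟩
        · rw [Finset.card_insert_of_notMem (fun hc => hK's (Finset.mem_of_mem_erase hc)),
            Finset.card_erase_of_mem hKs, hs]
          omega
        · have hK'mem : K' ∈ insert K' (s.erase K) := Finset.mem_insert_self _ _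
          have hKnmem : K ∉ insert K' (s.erase K) := by
            intro hc
            rcases Finset.mem_insert.mp hc with hc | hc
            · exact hne (hc.symm)
            · exact (Finset.notMem_erase K s) hc
          rw [hsumg _, if_pos hK'mem, if_neg hKnmem]
          rw [Finset.sum_insert (fun hc => hK's (Finset.mem_of_mem_erase hc))]
          have hqq : q K ≤ q K' + Δ := by
            have := hq (le_of_lt hK'K)
            linarith
          calc ∑ i ∈ s, q i = q K + ∑ i ∈ s.erase K, q i := (Finset.add_sum_erase s q hKs).symm
            _ ≤ (q K' + Δ) + ∑ i ∈ s.erase K, q i := by linarith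
            _ = q K' + ∑ i ∈ s.erase K, q i + (Δ - 0) := by ring
    · refine ⟨s, hs, ?_⟩
      rw [hsumg s, if_neg hKs]
      have : (0:ℝ) ≤ (if K' ∈ s then Δ else 0) := by
        split_ifs
        · exact le_of_lt hKpos
        · exact le_rfl
      linarith

end Aux

/-- For a decreasing probability vector `p`, `B^n(p)` majorizes `B^m(p)`
whenever `n ≥ m ≥ 0`. -/
theorem maxSwap_iterates_monotone {d : ℕ} (hd : 2 ≤ d)
    (a b : ℝ) (hb : 0 < b) (hba : b ≤ a) (hab : a + b ≤ 1)
    (p : Fin d → ℝ) (hnn : ∀ i, 0 ≤ p i) (hsum : ∑ i, p i = 1) (hdec : Antitone p)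
    (m n : ℕ) (hmn : m ≤ n) :
    IsMajorizedBy ((maxSwap a b)^[m] p) ((maxSwap a b)^[n] p) := by
  have iter_anti : ∀ (j : ℕ) (q : Fin d → ℝ), Antitone q →
      Antitone ((maxSwap a b)^[j] q) := by
    intro j
    induction j with
    | zero => intro q hq; simpa using hq
    | succ j ih =>
      intro q hq
      rw [Function.iterate_succ_apply']
      exact maxSwap_antitone a b _ (ih q hq)
  have iter_major : ∀ (j : ℕ) (q : Fin d → ℝ), Antitone q →
      IsMajorizedBy q ((maxSwap a b)^[j] q) := by
    intro j
    induction j with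
    | zero => intro q hq; simpa using isMajorizedBy_refl q
    | succ j ih =>
      intro q hq
      rw [Function.iterate_succ_apply']
      exact isMajorizedBy_trans (ih q hq) (maxSwap_major a b _ (iter_anti j q hq))
  obtain ⟨j, rfl⟩ := Nat.exists_eq_add_of_le hmn
  rw [add_comm m j, Function.iterate_add_apply]
  exact iter_major j _ (iter_anti m p hdec)
end
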